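/- Let k be a positive natural number and let R_i (i ∈ ℕ) and R be normal subgroups of FreeGroup (Fin k) such that R_i converges to R in the Chabauty topology. Then limsup_{i → ∞} ρ(R_i) ≥ ρ(R): the spectral radius is semicontinuous along Chabauty limits of marked groups (property (∗∗) of Proposition 1.4 for the spectral radius). -/

import Mathlib

open Filter

/-- The letter map `ε : Fin k × Bool → FreeGroup (Fin k)` sending `(j, true)` to the
generator `of j` and `(j, false)` to its inverse. -/
def letterMap {k : ℕ} (p : Fin k × Bool) : FreeGroup (Fin k) :=
  if p.2 then FreeGroup.of p.1 else (FreeGroup.of p.1)⁻¹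

/-- The cogrowth count of the marked group `F/R`, where `R` is a normal subgroup of the
free group `F = FreeGroup (Fin k)`: the number of words of length `n` in the generators
and their inverses whose product lies in `R`. -/
noncomputable def cogrowthCountSubgroup (k : ℕ) (R : Subgroup (FreeGroup (Fin k))) (n : ℕ) : ℕ :=
  Nat.card {w : Fin n → Fin k × Bool | (List.ofFn (fun t => letterMap (w t))).prod ∈ R}

/-- The spectral radius of the marked group `F/R`:
`ρ(R) = limsup_{n → ∞} c_R(n)^(1/n) / (2k)`. -/
noncomputable def spectralRadiusSubgroup (k : ℕ) (R : Subgroup (FreeGroup (Fin k))) : ℝ :=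
  Filter.atTop.limsup fun n : ℕ =>
    (cogrowthCountSubgroup k R n : ℝ) ^ ((1 : ℝ) / n) / (2 * k)

lemma letterMap_len {k : ℕ} (p : Fin k × Bool) : (letterMap p).toWord.length ≤ 1 := by
  rcases p with ⟨j, b⟩
  cases b <;>
    simp [letterMap, FreeGroup.toWord_of, FreeGroup.toWord_inv, FreeGroup.invRev_length]

lemma prod_len {k : ℕ} (l : List (Fin k × Bool)) :
    ((l.map letterMap).prod).toWord.length ≤ l.length := by
  induction l with
  | nil => simp
  | cons p l ih =>
    simp only [List.map_cons, List.prod_cons, List.length_cons]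
    calc ((letterMap p * (l.map letterMap).prod).toWord).length
        ≤ ((letterMap p).toWord ++ ((l.map letterMap).prod).toWord).length :=
          (FreeGroup.toWord_mul_sublist _ _).length_le
      _ ≤ 1 + l.length := by
          simp only [List.length_append]
          exact Nat.add_le_add (letterMap_len p) ih
      _ = l.length + 1 := Nat.add_comm _ _

lemma ofFn_letter {k n : ℕ} (w : Fin n → Fin k × Bool) :
    (List.ofFn (fun t => letterMap (w t))) = (List.ofFn w).map letterMap := by
  rw [List.map_ofFn]; rfl

lemma prod_len' {k n : ℕ} (w : Fin n → Fin k × Bool) :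
    ((List.ofFn (fun t => letterMap (w t))).prod).toWord.length ≤ n := by
  rw [ofFn_letter]
  simpa using prod_len (List.ofFn w)

lemma cg_le (k : ℕ) (R : Subgroup (FreeGroup (Fin k))) (n : ℕ) :
    cogrowthCountSubgroup k R n ≤ (2 * k) ^ n := by
  have h := Nat.card_le_card_of_injective
    (fun w : {w : Fin n → Fin k × Bool |
        (List.ofFn (fun t => letterMap (w t))).prod ∈ R} => (w : Fin n → Fin k × Bool))
    Subtype.val_injective
  simpa [cogrowthCountSubgroup, Nat.card_eq_fintype_card, Nat.mul_comm] using h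

lemma cg_zero (k : ℕ) (R : Subgroup (FreeGroup (Fin k))) :
    1 ≤ cogrowthCountSubgroup k R 0 := by
  have : Nonempty {w : Fin 0 → Fin k × Bool |
      (List.ofFn (fun t => letterMap (w t))).prod ∈ R} :=
    ⟨⟨Fin.elim0, by simpa using one_mem R⟩⟩
  exact Nat.card_pos

lemma cg_supermul (k : ℕ) (R : Subgroup (FreeGroup (Fin k))) (m n : ℕ) :
    cogrowthCountSubgroup k R m * cogrowthCountSubgroup k R n ≤
      cogrowthCountSubgroup k R (m + n) := by
  classical
  set A := {w : Fin m → Fin k × Bool | (List.ofFn (fun t => letterMap (w t))).prod ∈ R}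
  set B := {w : Fin n → Fin k × Bool | (List.ofFn (fun t => letterMap (w t))).prod ∈ R}
  set C := {w : Fin (m + n) → Fin k × Bool | (List.ofFn (fun t => letterMap (w t))).prod ∈ R}
  have hmem : ∀ (u : A) (v : B), Fin.append (u : Fin m → Fin k × Bool) (v : _) ∈ C := by
    rintro ⟨u, hu⟩ ⟨v, hv⟩
    have : (List.ofFn fun t => letterMap (Fin.append u v t)).prod =
        (List.ofFn fun t => letterMap (u t)).prod * (List.ofFn fun t => letterMap (v t)).prod := by
      rw [ofFn_letter, ofFn_letter, ofFn_letter]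
      rw [show List.ofFn (Fin.append u v) = List.ofFn u ++ List.ofFn v from
        List.ofFn_fin_append u v]
      rw [List.map_append, List.prod_append]
    simpa [C, Set.mem_setOf_eq, this] using mul_mem hu hv
  have hinj : Function.Injective (fun p : A × B => (⟨Fin.append p.1 p.2, hmem p.1 p.2⟩ : C)) := by
    rintro ⟨⟨u, hu⟩, ⟨v, hv⟩⟩ ⟨⟨u', hu'⟩, ⟨v', hv'⟩⟩ h
    have h' : Fin.append u v = Fin.append u' v' := congrArg Subtype.val h
    have hu2 : u = u' := by
      funext i
      have := congrFun h' (Fin.castAdd n i)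
      simpa [Fin.append_left] using this
    have hv2 : v = v' := by
      funext i
      have := congrFun h' (Fin.natAdd m i)
      simpa [Fin.append_right] using this
    simp [hu2, hv2]
  have := Nat.card_le_card_of_injective _ hinj
  rw [Nat.card_prod] at this
  exact this

lemma cg_pow (k : ℕ) (R : Subgroup (FreeGroup (Fin k))) (n t : ℕ) :
    cogrowthCountSubgroup k R n ^ t ≤ cogrowthCountSubgroup k R (t * n) := by
  induction t with
  | zero => simpa using cg_zero k R
  | succ t ih =>
    calc cogrowthCountSubgroup k R n ^ (t + 1)
        = cogrowthCountSubgroup k R n ^ t * cogrowthCountSubgroup k R n := pow_succ _ _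
      _ ≤ cogrowthCountSubgroup k R (t * n) * cogrowthCountSubgroup k R n :=
          Nat.mul_le_mul_right _ ih
      _ ≤ cogrowthCountSubgroup k R (t * n + n) := cg_supermul k R _ _
      _ = cogrowthCountSubgroup k R ((t + 1) * n) := by ring_nf

noncomputable def aSeq (k : ℕ) (R : Subgroup (FreeGroup (Fin k))) (n : ℕ) : ℝ :=
  (cogrowthCountSubgroup k R n : ℝ) ^ ((1 : ℝ) / n) / (2 * k)

lemma aSeq_nonneg (k : ℕ) (R : Subgroup (FreeGroup (Fin k))) (n : ℕ) : 0 ≤ aSeq k R n :=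
  div_nonneg (Real.rpow_nonneg (Nat.cast_nonneg _) _) (by positivity)

lemma aSeq_le_one (k : ℕ) (hk : 0 < k) (R : Subgroup (FreeGroup (Fin k))) (n : ℕ) :
    aSeq k R n ≤ 1 := by
  have h2k : (0:ℝ) < 2 * k := by positivity
  rcases Nat.eq_zero_or_pos n with rfl | hn
  · have : aSeq k R 0 = 1 / (2 * k) := by
      simp [aSeq]
    rw [this, div_le_one h2k]
    have : (1:ℝ) ≤ k := by exact_mod_cast hk
    linarith
  · rw [aSeq, div_le_one h2k]
    have hc : (cogrowthCountSubgroup k R n : ℝ) ≤ (2 * k) ^ n := by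
      exact_mod_cast cg_le k R n
    calc (cogrowthCountSubgroup k R n : ℝ) ^ ((1:ℝ)/n)
        ≤ ((2 * (k:ℝ)) ^ n) ^ ((1:ℝ)/n) := by
          apply Real.rpow_le_rpow (Nat.cast_nonneg _) _ (by positivity)
          exact_mod_cast hc
      _ = 2 * k := by
          rw [← Real.rpow_natCast (2 * (k:ℝ)) n, ← Real.rpow_mul (le_of_lt h2k)]
          rw [mul_one_div, div_self (by exact_mod_cast hn.ne' : (n:ℝ) ≠ 0), Real.rpow_one]

lemma aSeq_le_rho (k : ℕ) (hk : 0 < k) (R : Subgroup (FreeGroup (Fin k))) (n : ℕ) (hn : 1 ≤ n) :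
    aSeq k R n ≤ spectralRadiusSubgroup k R := by
  have hbdd : IsBoundedUnder (· ≤ ·) atTop (fun m => aSeq k R m) :=
    isBoundedUnder_of ⟨1, fun m => aSeq_le_one k hk R m⟩
  have hfreq : ∃ᶠ m in atTop, aSeq k R n ≤ aSeq k R m := by
    rw [frequently_atTop]
    intro m0
    refine ⟨(max m0 1) * n, ?_, ?_⟩
    · calc m0 ≤ max m0 1 := le_max_left _ _
        _ = (max m0 1) * 1 := (mul_one _).symm
        _ ≤ (max m0 1) * n := Nat.mul_le_mul_left _ hn
    · set t := max m0 1 with ht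
      have htpos : 0 < t := lt_of_lt_of_le one_pos (le_max_right _ _)
      have hcast : ((cogrowthCountSubgroup k R n : ℝ)) ^ (t:ℕ) ≤
          (cogrowthCountSubgroup k R (t * n) : ℝ) := by
        exact_mod_cast cg_pow k R n t
      have hne : ((t * n : ℕ) : ℝ) ≠ 0 := by
        have : 0 < t * n := Nat.mul_pos htpos hn
        exact_mod_cast this.ne'
      have key : (cogrowthCountSubgroup k R n : ℝ) ^ ((1:ℝ)/n) ≤
          (cogrowthCountSubgroup k R (t * n) : ℝ) ^ ((1:ℝ)/((t*n:ℕ):ℝ)) := by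
        calc (cogrowthCountSubgroup k R n : ℝ) ^ ((1:ℝ)/n)
            = ((cogrowthCountSubgroup k R n : ℝ) ^ (t:ℕ)) ^ ((1:ℝ)/((t*n:ℕ):ℝ)) := by
              rw [← Real.rpow_natCast (cogrowthCountSubgroup k R n : ℝ) t,
                ← Real.rpow_mul (Nat.cast_nonneg _)]
              congr 1
              have hn' : (n:ℝ) ≠ 0 := Nat.cast_ne_zero.mpr (Nat.one_le_iff_ne_zero.mp hn)
              have ht' : (t:ℝ) ≠ 0 := by exact_mod_cast htpos.ne'
              push_cast
              field_simp
          _ ≤ (cogrowthCountSubgroup k R (t * n) : ℝ) ^ ((1:ℝ)/((t*n:ℕ):ℝ)) := by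
              apply Real.rpow_le_rpow (by positivity) hcast
              positivity
      unfold aSeq
      apply div_le_div_of_nonneg_right key ?_ |>.trans_eq ?_
      · positivity
      · norm_cast
  exact le_limsup_of_frequently_le hfreq hbdd

lemma rho_eq (k : ℕ) (R : Subgroup (FreeGroup (Fin k))) :
    spectralRadiusSubgroup k R = Filter.atTop.limsup (aSeq k R) := rfl


/-- The spectral radius is semicontinuous along Chabauty limits of marked groups:
if normal subgroups `R i` of the free group converge to `R` in the Chabauty topology,
then `limsup_i ρ(R i) ≥ ρ(R)`. -/
theorem spectralRadius_semicontinuous (k : ℕ) (hk : 0 < k)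
    (R : ℕ → Subgroup (FreeGroup (Fin k))) (Rlim : Subgroup (FreeGroup (Fin k)))
    (hnormal : ∀ i, (R i).Normal) (hnormallim : Rlim.Normal)
    (hconv : ∀ n : ℕ, ∃ N : ℕ, ∀ i ≥ N, ∀ w : FreeGroup (Fin k),
      (FreeGroup.toWord w).length ≤ n → (w ∈ R i ↔ w ∈ Rlim)) :
    spectralRadiusSubgroup k Rlim ≤
      Filter.atTop.limsup fun i => spectralRadiusSubgroup k (R i) := by
  set L := Filter.atTop.limsup fun i => spectralRadiusSubgroup k (R i) with hL
  rw [rho_eq]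
  have hcob : IsCoboundedUnder (· ≤ ·) atTop (aSeq k Rlim) :=
    isCoboundedUnder_le_of_le atTop (x := 0) (fun m => aSeq_nonneg k Rlim m)
  apply limsup_le_of_le hcob
  filter_upwards [eventually_ge_atTop 1] with n hn
  obtain ⟨N, hN⟩ := hconv n
  have heq : ∀ i ≥ N, cogrowthCountSubgroup k (R i) n = cogrowthCountSubgroup k Rlim n := by
    intro i hi
    have hset : {w : Fin n → Fin k × Bool | (List.ofFn (fun t => letterMap (w t))).prod ∈ R i}
        = {w : Fin n → Fin k × Bool | (List.ofFn (fun t => letterMap (w t))).prod ∈ Rlim} := by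
      ext w
      exact hN i hi _ (prod_len' w)
    unfold cogrowthCountSubgroup
    rw [hset]
  have hevent : ∀ᶠ i in atTop, aSeq k Rlim n ≤ spectralRadiusSubgroup k (R i) := by
    filter_upwards [eventually_ge_atTop N] with i hi
    have : aSeq k Rlim n = aSeq k (R i) n := by
      unfold aSeq; rw [heq i hi]
    rw [this]
    exact aSeq_le_rho k hk (R i) n hn
  have hbdd : IsBoundedUnder (· ≤ ·) atTop (fun i => spectralRadiusSubgroup k (R i)) := by
    apply isBoundedUnder_of
    refine ⟨1, fun i => ?_⟩
    rw [rho_eq]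
    apply limsup_le_of_le
      (isCoboundedUnder_le_of_le atTop (x := 0) (fun m => aSeq_nonneg k (R i) m))
    exact Eventually.of_forall (fun m => aSeq_le_one k hk (R i) m)
  exact le_limsup_of_frequently_le hevent.frequently hbdd
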